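/- arXiv:1106.4712 — 6 statements merged into one kernel-verified Lean document; each statement's English description precedes it below -/
import Mathlib

section
/- Let L ≥ 2. Suppose D and E are linear operators on a complex vector space V, φ : V → ℂ is a linear functional, and v₂ ∈ V, satisfying q·E·D − p·D·E = D + E, φ∘(α·E − γ·D + id) = 0, and (β·D − δ·E + id)v₂ = 0. Define Φ ∈ (ℂ²)^{⊗L} by its components on the occupation basis: ⟨τ₁…τ_L|Φ⟩ := φ((τ₁D + (1−τ₁)E)(τ₂D + (1−τ₂)E)⋯(τ_LD + (1−τ_L)E) v₂) for (τ₁,…,τ_L) ∈ {0,1}^L, the product taken in order of increasing site index. Then W Φ = 0, where W is the ASEP Markov matrix with s = 0. -/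
open scoped BigOperators

noncomputable section

lemma ofFn_update' {α : Type*} {n : ℕ} (f : Fin n → α) (i : ℕ) (hi : i < n) (x : α) :
    List.ofFn (Function.update f ⟨i, hi⟩ x)
      = (List.ofFn f).take i ++ x :: (List.ofFn f).drop (i+1) := by
  apply List.ext_getElem
  · simp; omega
  · intro k h1 h2
    have hk : k < n := by simpa using h1
    rw [List.getElem_ofFn, List.getElem_append]
    have hlen : ((List.ofFn f).take i).length = i := by simp; omega
    by_cases hki : k < i
    · rw [dif_pos (by simp; omega), List.getElem_take, List.getElem_ofFn,
        Function.update_of_ne (by simp [Fin.ext_iff]; omega)]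
    · rw [dif_neg (by simp; omega), List.getElem_cons]
      by_cases hke : k = i
      · rw [dif_pos (by omega)]
        subst hke; simp
      · rw [dif_neg (by omega), List.getElem_drop, List.getElem_ofFn,
          Function.update_of_ne (by simp [Fin.ext_iff]; omega)]
        congr 1
        simp [Fin.ext_iff]; omega

lemma ofFn_update2' {α : Type*} {n : ℕ} (f : Fin n → α) (i : ℕ) (hi : i + 1 < n) (x y : α) :
    List.ofFn (Function.update (Function.update f ⟨i, by omega⟩ x) ⟨i+1, hi⟩ y)
      = (List.ofFn f).take i ++ x :: y :: (List.ofFn f).drop (i+2) := by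
  apply List.ext_getElem
  · simp; omega
  · intro k h1 h2
    have hk : k < n := by simpa using h1
    rw [List.getElem_ofFn, List.getElem_append]
    have hlen : ((List.ofFn f).take i).length = i := by simp; omega
    by_cases hki : k < i
    · rw [dif_pos (by simp; omega), List.getElem_take, List.getElem_ofFn,
        Function.update_of_ne (by simp [Fin.ext_iff]; omega),
        Function.update_of_ne (by simp [Fin.ext_iff]; omega)]
    · rw [dif_neg (by simp; omega), List.getElem_cons]
      by_cases hke : k = i
      · rw [dif_pos (by omega)]
        rw [Function.update_of_ne (by simp [Fin.ext_iff]; omega)]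
        subst hke; simp
      · rw [dif_neg (by omega), List.getElem_cons]
        by_cases hke2 : k = i + 1
        · rw [dif_pos (by omega)]
          subst hke2; simp
        · rw [dif_neg (by omega), List.getElem_drop, List.getElem_ofFn,
            Function.update_of_ne (by simp [Fin.ext_iff]; omega),
            Function.update_of_ne (by simp [Fin.ext_iff]; omega)]
          congr 1
          simp [Fin.ext_iff]; omega


/-- The bulk matrix `w` of the open ASEP, with rows/columns indexed by
`(τ, τ') ∈ Fin 2 × Fin 2` in the order `(0,0), (0,1), (1,0), (1,1)`. -/
def wB (p q : ℂ) : Fin 2 × Fin 2 → Fin 2 × Fin 2 → ℂ := fun r c =>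
  if r = (0, 1) ∧ c = (0, 1) then -q
  else if r = (0, 1) ∧ c = (1, 0) then p
  else if r = (1, 0) ∧ c = (0, 1) then q
  else if r = (1, 0) ∧ c = (1, 0) then -p
  else 0

/-- The right boundary matrix `K = [[−δ, β], [δ, −β]]`. -/
def KB (β δ : ℂ) : Fin 2 → Fin 2 → ℂ := fun i j =>
  if i = 0 then (if j = 0 then -δ else β) else (if j = 0 then δ else -β)

/-- The left boundary matrix `K̂ = [[−α, γe^{−s}], [αe^s, −γ]]`. -/
def KhatB (α γ s : ℂ) : Fin 2 → Fin 2 → ℂ := fun i j =>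
  if i = 0 then (if j = 0 then -α else γ * Complex.exp (-s))
  else (if j = 0 then α * Complex.exp s else -γ)

/-- Action of a one-site matrix `M` on the tensor leg `i` of `(ℂ²)^{⊗L}`,
the latter identified with maps `(Fin L → Fin 2) → ℂ`. -/
def siteAct {L : ℕ} (M : Fin 2 → Fin 2 → ℂ) (i : Fin L) (Φ : (Fin L → Fin 2) → ℂ) :
    (Fin L → Fin 2) → ℂ :=
  fun τ => ∑ σ : Fin 2, M (τ i) σ * Φ (Function.update τ i σ)

/-- Action of a two-site matrix `M` on the tensor legs `i, j` of `(ℂ²)^{⊗L}`. -/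
def bondAct {L : ℕ} (M : Fin 2 × Fin 2 → Fin 2 × Fin 2 → ℂ) (i j : Fin L)
    (Φ : (Fin L → Fin 2) → ℂ) : (Fin L → Fin 2) → ℂ :=
  fun τ => ∑ σ : Fin 2 × Fin 2,
    M (τ i, τ j) σ * Φ (Function.update (Function.update τ i σ.1) j σ.2)

/-- The ASEP Markov matrix `W = K̂₁ + K_L + Σ_{j=1}^{L−1} w_{j,j+1}`
acting on `(ℂ²)^{⊗L}`. -/
def Wop (p q α β γ δ s : ℂ) (L : ℕ) (hL : 0 < L)
    (Φ : (Fin L → Fin 2) → ℂ) : (Fin L → Fin 2) → ℂ :=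
  siteAct (KhatB α γ s) ⟨0, hL⟩ Φ + siteAct (KB β δ) ⟨L - 1, by omega⟩ Φ +
    ∑ j : Fin (L - 1),
      bondAct (wB p q) ⟨j.1, by have := j.2; omega⟩ ⟨j.1 + 1, by have := j.2; omega⟩ Φ

/-- The matrix-Ansatz (DEHP) steady state: if `D, E, φ, v₂` satisfy
`qED − pDE = D + E`, `φ ∘ (αE − γD + id) = 0` and `(βD − δE + id)v₂ = 0`, then the vector
`Φ` with components `⟨τ|Φ⟩ = φ((τ₁D + (1−τ₁)E)⋯(τ_LD + (1−τ_L)E) v₂)` satisfies `WΦ = 0`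
for the ASEP Markov matrix `W` with `s = 0`. -/
theorem statement0 (p q α β γ δ : ℂ) (hp : p ≠ 0) (hq : q ≠ 0) (hpq : p ≠ q)
    (L : ℕ) (hL : 2 ≤ L)
    {V : Type*} [AddCommGroup V] [Module ℂ V]
    (D E : Module.End ℂ V) (φ : V →ₗ[ℂ] ℂ) (v₂ : V)
    (hbulk : q • (E * D) - p • (D * E) = D + E)
    (hleft : φ ∘ₗ (α • E - γ • D + 1) = 0)
    (hright : (β • D - δ • E + 1) v₂ = 0)
    (Φ : (Fin L → Fin 2) → ℂ)
    (hΦ : ∀ τ : Fin L → Fin 2,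
      Φ τ = φ ((List.ofFn fun i : Fin L => if τ i = 1 then D else E).prod v₂)) :
    Wop p q α β γ δ 0 L (by omega) Φ = 0 := by
  classical
  have two_cases : ∀ a : Fin 2, a = 0 ∨ a = 1 := by decide
  funext τ
  simp only [Wop, Pi.add_apply, Finset.sum_apply, siteAct, bondAct, Pi.zero_apply]
  set m : Fin 2 → Module.End ℂ V := fun σ => if σ = 1 then D else E with hm
  set l : List (Module.End ℂ V) := List.ofFn (fun k : Fin L => m (τ k)) with hldef
  have hllen : l.length = L := by simp [hldef]
  set A : ℕ → Module.End ℂ V := fun j => (l.take j).prod with hAdef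
  set B : ℕ → Module.End ℂ V := fun j => (l.drop j).prod with hBdef
  have hm0 : m 0 = E := by simp [hm]
  have hm1 : m 1 = D := by simp [hm]
  have hA0 : A 0 = 1 := by simp [hAdef]
  have hBL : B L = 1 := by
    simp only [hBdef]
    rw [List.drop_eq_nil_of_le (by omega)]
    rfl
  -- single-site update formula
  have F1 : ∀ (i : ℕ) (hi : i < L) (σ : Fin 2),
      Φ (Function.update τ ⟨i, hi⟩ σ) = φ (A i (m σ (B (i+1) v₂))) := by
    intro i hi σ
    rw [hΦ]
    have h0 : (fun k : Fin L => if Function.update τ ⟨i, hi⟩ σ k = 1 then D else E)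
        = Function.update (fun k : Fin L => m (τ k)) ⟨i, hi⟩ (m σ) := by
      rw [show (fun k : Fin L => if Function.update τ ⟨i, hi⟩ σ k = 1 then D else E)
          = m ∘ Function.update τ ⟨i, hi⟩ σ from rfl, Function.comp_update]
      rfl
    rw [h0, ofFn_update', ← hldef, List.prod_append, List.prod_cons]
    simp [Module.End.mul_apply]
    rfl
  -- double-site update formula
  have F2 : ∀ (a b : Fin L), a.1 + 1 = b.1 → ∀ σ₁ σ₂ : Fin 2,
      Φ (Function.update (Function.update τ a σ₁) b σ₂)
        = φ (A a.1 (m σ₁ (m σ₂ (B (a.1+2) v₂)))) := by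
    rintro ⟨i, hi⟩ ⟨k, hk⟩ hab σ₁ σ₂
    simp only at hab
    subst hab
    rw [hΦ]
    have h0 : (fun j : Fin L =>
          if Function.update (Function.update τ ⟨i, hi⟩ σ₁) ⟨i+1, hk⟩ σ₂ j = 1 then D else E)
        = Function.update (Function.update (fun k : Fin L => m (τ k)) ⟨i, by omega⟩ (m σ₁))
            ⟨i+1, hk⟩ (m σ₂) := by
      rw [show (fun j : Fin L =>
          if Function.update (Function.update τ ⟨i, hi⟩ σ₁) ⟨i+1, hk⟩ σ₂ j = 1 then D else E)
          = m ∘ Function.update (Function.update τ ⟨i, hi⟩ σ₁) ⟨i+1, hk⟩ σ₂ from rfl,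
        Function.comp_update, Function.comp_update]
      rfl
    rw [h0, ofFn_update2', ← hldef, List.prod_append, List.prod_cons, List.prod_cons]
    simp [Module.End.mul_apply]
    rfl
  have hAs : ∀ (j : ℕ) (hj : j < L), A (j+1) = A j * m (τ ⟨j, hj⟩) := by
    intro j hj
    simp only [hAdef]
    rw [List.prod_take_succ _ j (by omega)]
    congr 1
    simp [hldef]
  have hBs : ∀ (j : ℕ) (hj : j < L), B j = m (τ ⟨j, hj⟩) * B (j+1) := by
    intro j hj
    simp only [hBdef]
    rw [List.drop_eq_getElem_cons (by omega : j < l.length), List.prod_cons]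
    congr 1
    simp [hldef]
  set R : ℕ → ℂ := fun j => φ (A j (B (j+1) v₂)) with hRdef
  set ε : ℕ → ℂ := fun j => if h : j < L then (if τ ⟨j, h⟩ = 1 then 1 else -1) else 0 with hεdef
  set g : ℕ → ℂ := fun j => ε j * R j with hgdef
  -- scalar forms of the hypotheses
  have hleft' : ∀ x : V, α * φ (E x) - γ * φ (D x) + φ x = 0 := by
    intro x
    have h := LinearMap.congr_fun hleft x
    simpa [LinearMap.comp_apply, LinearMap.add_apply, LinearMap.sub_apply,
      LinearMap.smul_apply, smul_eq_mul] using h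
  have hbulk' : ∀ (Aop : Module.End ℂ V) (u : V),
      q * φ (Aop (E (D u))) - p * φ (Aop (D (E u)))
        = φ (Aop (D u)) + φ (Aop (E u)) := by
    intro Aop u
    have h := congrArg (fun T : Module.End ℂ V => φ (Aop (T u))) hbulk
    simpa [LinearMap.sub_apply, LinearMap.add_apply, LinearMap.smul_apply,
      Module.End.mul_apply, map_add, map_sub, map_smul, smul_eq_mul] using h
  have hright' : ∀ (Aop : Module.End ℂ V),
      β * φ (Aop (D v₂)) - δ * φ (Aop (E v₂)) + φ (Aop v₂) = 0 := by
    intro Aop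
    have h := congrArg (fun x => φ (Aop x)) hright
    simpa [LinearMap.add_apply, LinearMap.sub_apply, LinearMap.smul_apply,
      map_add, map_sub, map_smul, smul_eq_mul] using h
  -- left boundary
  have hLft : ∀ (i : Fin L), i.1 = 0 →
      (∑ σ : Fin 2, KhatB α γ 0 (τ i) σ * Φ (Function.update τ i σ)) = -(g 0) := by
    rintro ⟨i, hi⟩ h0
    simp only at h0
    subst h0
    rw [Fin.sum_univ_two, F1 0 hi 0, F1 0 hi 1, hm0, hm1, hA0]
    simp only [Module.End.one_apply]
    have hw := hleft' (B 1 v₂)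
    rcases two_cases (τ ⟨0, hi⟩) with h | h
    · simp only [hgdef, hεdef, hRdef, KhatB, h, hA0, dif_pos hi, Fin.isValue,
        Module.End.one_apply, neg_zero, Complex.exp_zero, mul_one]
      norm_num [h]
      linear_combination -hw
    · simp only [hgdef, hεdef, hRdef, KhatB, h, hA0, dif_pos hi, Fin.isValue,
        Module.End.one_apply, neg_zero, Complex.exp_zero, mul_one]
      norm_num [h]
      linear_combination hw
  -- right boundary
  have hRt : ∀ (i : Fin L), i.1 = L - 1 →
      (∑ σ : Fin 2, KB β δ (τ i) σ * Φ (Function.update τ i σ)) = g (L-1) := by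
    rintro ⟨i, hi⟩ h0
    subst h0
    rw [Fin.sum_univ_two, F1 (L-1) hi 0, F1 (L-1) hi 1, hm0, hm1,
      show L - 1 + 1 = L by omega, hBL]
    simp only [Module.End.one_apply]
    have hw := hright' (A (L-1))
    rcases two_cases (τ ⟨L-1, hi⟩) with h | h
    · simp only [hgdef, hεdef, hRdef, KB, h, dif_pos hi, Fin.isValue,
        show L - 1 + 1 = L by omega, hBL, Module.End.one_apply]
      norm_num [h]
      linear_combination hw
    · simp only [hgdef, hεdef, hRdef, KB, h, dif_pos hi, Fin.isValue,
        show L - 1 + 1 = L by omega, hBL, Module.End.one_apply]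
      norm_num [h]
      linear_combination -hw
  -- bonds
  have hBond : ∀ (a b : Fin L), a.1 + 1 = b.1 →
      (∑ σ : Fin 2 × Fin 2, wB p q (τ a, τ b) σ *
          Φ (Function.update (Function.update τ a σ.1) b σ.2))
        = g a.1 - g b.1 := by
    intro a b hab
    have ha : a.1 < L := a.2
    have hb : b.1 < L := b.2
    have hRa : R a.1 = φ (A a.1 (m (τ b) (B (a.1+2) v₂))) := by
      have h1 : B (a.1+1) = m (τ b) * B (a.1+2) := by
        have := hBs (a.1+1) (by omega)
        rwa [show (⟨a.1+1, by omega⟩ : Fin L) = b from Fin.ext hab] at this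
      simp only [hRdef, h1, Module.End.mul_apply]
    have hRb : R b.1 = φ (A a.1 (m (τ a) (B (a.1+2) v₂))) := by
      have h1 : A (a.1+1) = A a.1 * m (τ a) := by
        have := hAs a.1 ha
        rwa [show (⟨a.1, ha⟩ : Fin L) = a from Fin.ext rfl] at this
      simp only [hRdef, ← hab, h1, Module.End.mul_apply, show a.1+1+1 = a.1+2 from rfl]
    simp only [Fintype.sum_prod_type, Fin.sum_univ_two]
    rw [F2 a b hab 0 0, F2 a b hab 0 1, F2 a b hab 1 0, F2 a b hab 1 1, hm0, hm1]
    have hbu := hbulk' (A a.1) (B (a.1+2) v₂)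
    rcases two_cases (τ a) with h1 | h1 <;> rcases two_cases (τ b) with h2 | h2 <;>
      simp only [hgdef, hεdef, dif_pos ha, dif_pos hb, Fin.eta, h1, h2, hRa, hRb, hm0, hm1] <;>
      norm_num [wB, h1, h2, Prod.ext_iff]
    · linear_combination -hbu
    · linear_combination hbu
  -- assemble
  have hsum : ∑ j : Fin (L-1), (g j.1 - g (j.1+1)) = g 0 - g (L-1) := by
    rw [Fin.sum_univ_eq_sum_range (fun j => g j - g (j+1)) (L-1),
      Finset.sum_range_sub' g (L-1)]
  calc (∑ σ : Fin 2, KhatB α γ 0 (τ ⟨0, by omega⟩) σ * Φ (Function.update τ ⟨0, by omega⟩ σ)) +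
        (∑ σ : Fin 2, KB β δ (τ ⟨L-1, by omega⟩) σ * Φ (Function.update τ ⟨L-1, by omega⟩ σ)) +
        ∑ j : Fin (L-1), ∑ σ : Fin 2 × Fin 2,
          wB p q (τ ⟨j.1, by have := j.2; omega⟩, τ ⟨j.1+1, by have := j.2; omega⟩) σ *
            Φ (Function.update (Function.update τ ⟨j.1, by have := j.2; omega⟩ σ.1)
              ⟨j.1+1, by have := j.2; omega⟩ σ.2)
      = -(g 0) + g (L-1) + ∑ j : Fin (L-1), (g j.1 - g (j.1+1)) := by
        congr 1
        · congr 1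
          · exact hLft _ rfl
          · exact hRt _ rfl
        · exact Finset.sum_congr rfl fun j _ => hBond _ _ rfl
    _ = 0 := by rw [hsum]; ring
end
end

section
/- Let D, E be linear operators on a complex vector space V satisfying q·E·D − p·D·E = D + E. Then for every v ∈ ℂ, w(|ω(v)⟩⊗|ω(vq/p)⟩) = |ω(v)⟩⊗|t̄(vq/p)⟩ − |t̄(v)⟩⊗|ω(vq/p)⟩, as an identity of 4-tuples of operators on V. -/
open scoped BigOperators

noncomputable section

/-- `[u] = (1 − u)/(q − p)`. -/
def br (p q u : ℂ) : ℂ := (1 - u) / (q - p)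

/-- The operator pair `|ω(u)⟩ = (E − [u]·id, u·D + [u]·id)`. -/
def omegaPair {V : Type*} [AddCommGroup V] [Module ℂ V]
    (p q : ℂ) (D E : Module.End ℂ V) (u : ℂ) : Fin 2 → Module.End ℂ V :=
  fun i => if i = 0 then E - br p q u • 1 else u • D + br p q u • 1

/-- The operator pair `|t(u)⟩ = (u·id, −id)`. -/
def tPair {V : Type*} [AddCommGroup V] [Module ℂ V] (u : ℂ) :
    Fin 2 → Module.End ℂ V :=
  fun i => if i = 0 then u • 1 else -1

/-- The operator pair `|t̄(u)⟩ = (0, (p−q)(u·D + [u]·id))`. -/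
def tbarPair {V : Type*} [AddCommGroup V] [Module ℂ V]
    (p q : ℂ) (D : Module.End ℂ V) (u : ℂ) : Fin 2 → Module.End ℂ V :=
  fun i => if i = 0 then 0 else (p - q) • (u • D + br p q u • 1)

/-- Tensor product of two operator pairs, `(a,b)⊗(a′,b′) = (aa′, ab′, ba′, bb′)`,
with noncommutative ordered products. -/
def tensP {V : Type*} [AddCommGroup V] [Module ℂ V]
    (x y : Fin 2 → Module.End ℂ V) : Fin 2 × Fin 2 → Module.End ℂ V :=
  fun rc => x rc.1 * y rc.2

/-- Action of the `4×4` scalar matrix `w` on a 4-tuple of operators. -/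
def wAct {V : Type*} [AddCommGroup V] [Module ℂ V]
    (p q : ℂ) (X : Fin 2 × Fin 2 → Module.End ℂ V) : Fin 2 × Fin 2 → Module.End ℂ V :=
  fun r => ∑ c : Fin 2 × Fin 2, wB p q r c • X c

set_option maxHeartbeats 2000000 in
/-- If `qED − pDE = D + E` then
`w(|ω(v)⟩⊗|ω(vq/p)⟩) = |ω(v)⟩⊗|t̄(vq/p)⟩ − |t̄(v)⟩⊗|ω(vq/p)⟩`. -/
theorem statement2 (p q : ℂ) (hp : p ≠ 0) (hq : q ≠ 0) (hpq : p ≠ q)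
    {V : Type*} [AddCommGroup V] [Module ℂ V]
    (D E : Module.End ℂ V)
    (hbulk : q • (E * D) - p • (D * E) = D + E) (v : ℂ) :
    wAct p q (tensP (omegaPair p q D E v) (omegaPair p q D E (v * q / p))) =
      tensP (omegaPair p q D E v) (tbarPair p q D (v * q / p)) -
        tensP (tbarPair p q D v) (omegaPair p q D E (v * q / p)) := by
  have h1 : q • (E * D) = p • (D * E) + (D + E) := by
    rw [← hbulk]; abel
  have hED : E * D = q⁻¹ • (p • (D * E) + (D + E)) := by
    rw [← h1, smul_smul, inv_mul_cancel₀ hq, one_smul]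
  funext r
  fin_cases r <;>
  · simp only [Fin.zero_eta, Fin.mk_one, wAct, tensP, omegaPair, tbarPair, wB, br,
      Fintype.sum_prod_type, Fin.sum_univ_two, Pi.sub_apply, Prod.mk.injEq,
      Fin.isValue, one_ne_zero, zero_ne_one, and_true, and_false, false_and,
      true_and, and_self, reduceIte, if_true, if_false, zero_smul,
      zero_add, add_zero, mul_zero, zero_mul, mul_one, one_mul, sub_mul,
      mul_sub, add_mul, mul_add, smul_mul_assoc, mul_smul_comm, smul_smul,
      neg_smul, smul_add, smul_sub, hED]
    match_scalars <;> field_simp [sub_ne_zero.mpr (Ne.symm hpq)] <;> ring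
end
end

section
/- Let D, E be linear operators on a complex vector space V satisfying q·E·D − p·D·E = D + E. Then for all u, v ∈ ℂ, w(|ω(v)⟩⊗|ω(uq/p)⟩) = −q·|ω(v)⟩⊗|ω(uq/p)⟩ + q·|ω(u)⟩⊗|ω(v)⟩ + |ω(v)⟩⊗|t(uq/p)⟩ − |t̄(v)⟩⊗|ω(uq/p)⟩, as an identity of 4-tuples of operators on V. -/
open scoped BigOperators

noncomputable section

set_option maxHeartbeats 1000000 in
/-- If `qED − pDE = D + E` then
`w(|ω(v)⟩⊗|ω(uq/p)⟩) = −q·|ω(v)⟩⊗|ω(uq/p)⟩ + q·|ω(u)⟩⊗|ω(v)⟩ + |ω(v)⟩⊗|t(uq/p)⟩ − |t̄(v)⟩⊗|ω(uq/p)⟩`. -/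
theorem statement4 (p q : ℂ) (hp : p ≠ 0) (hq : q ≠ 0) (hpq : p ≠ q)
    {V : Type*} [AddCommGroup V] [Module ℂ V]
    (D E : Module.End ℂ V)
    (hbulk : q • (E * D) - p • (D * E) = D + E) (u v : ℂ) :
    wAct p q (tensP (omegaPair p q D E v) (omegaPair p q D E (u * q / p))) =
      (-q) • tensP (omegaPair p q D E v) (omegaPair p q D E (u * q / p)) +
        q • tensP (omegaPair p q D E u) (omegaPair p q D E v) +
        tensP (omegaPair p q D E v) (tPair (u * q / p)) -
        tensP (tbarPair p q D v) (omegaPair p q D E (u * q / p)) := by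
  have hqp : q - p ≠ 0 := sub_ne_zero.mpr (Ne.symm hpq)
  have h2 : q • (E * D) = D + E + p • (D * E) := by rw [← hbulk]; abel
  funext r
  obtain ⟨i, j⟩ := r
  fin_cases i <;> fin_cases j
  · simp only [wAct, tensP, omegaPair, tPair, tbarPair, wB,
      Fintype.sum_prod_type, Fin.sum_univ_two, Pi.add_apply, Pi.sub_apply,
      Pi.smul_apply, Prod.mk.injEq, Fin.isValue]
    norm_num
    obtain ⟨b1, hb1⟩ : ∃ x, br p q v = x := ⟨_, rfl⟩
    obtain ⟨b2, hb2⟩ : ∃ x, br p q (u * q / p) = x := ⟨_, rfl⟩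
    obtain ⟨b3, hb3⟩ : ∃ x, br p q u = x := ⟨_, rfl⟩
    have hED' : E * D = q⁻¹ • (D + E + p • (D * E)) := by
      rw [← h2, smul_smul, inv_mul_cancel₀ hq, one_smul]
    obtain ⟨qi, hqi⟩ : ∃ x, (q : ℂ)⁻¹ = x := ⟨_, rfl⟩
    rw [hqi] at hED'
    try rw [hb1]
    try rw [hb2]
    try rw [hb3]
    simp only [mul_add, add_mul, mul_sub, sub_mul, smul_mul_assoc,
      mul_smul_comm, mul_one, one_mul, hED', smul_add, smul_smul, neg_mul,
      mul_neg, neg_neg, smul_neg]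
    match_scalars
    all_goals try simp only [← hb1, ← hb2, ← hb3, ← hqi, br]
    all_goals field_simp
    all_goals try rw [eq_div_iff (by simp [hp, hq, hqp])]
    all_goals try rw [div_eq_iff (by simp [hp, hq, hqp])]
    all_goals try rw [eq_sub_iff_add_eq, zero_add, eq_div_iff (by simp [hp, hq, hqp])]
    all_goals ring
  · simp only [wAct, tensP, omegaPair, tPair, tbarPair, wB,
      Fintype.sum_prod_type, Fin.sum_univ_two, Pi.add_apply, Pi.sub_apply,
      Pi.smul_apply, Prod.mk.injEq, Fin.isValue]
    norm_num
    obtain ⟨b1, hb1⟩ : ∃ x, br p q v = x := ⟨_, rfl⟩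
    obtain ⟨b2, hb2⟩ : ∃ x, br p q (u * q / p) = x := ⟨_, rfl⟩
    obtain ⟨b3, hb3⟩ : ∃ x, br p q u = x := ⟨_, rfl⟩
    have hED' : E * D = q⁻¹ • (D + E + p • (D * E)) := by
      rw [← h2, smul_smul, inv_mul_cancel₀ hq, one_smul]
    obtain ⟨qi, hqi⟩ : ∃ x, (q : ℂ)⁻¹ = x := ⟨_, rfl⟩
    rw [hqi] at hED'
    try rw [hb1]
    try rw [hb2]
    try rw [hb3]
    simp only [mul_add, add_mul, mul_sub, sub_mul, smul_mul_assoc,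
      mul_smul_comm, mul_one, one_mul, hED', smul_add, smul_smul, neg_mul,
      mul_neg, neg_neg, smul_neg]
    match_scalars
    all_goals try simp only [← hb1, ← hb2, ← hb3, ← hqi, br]
    all_goals field_simp
    all_goals try rw [eq_div_iff (by simp [hp, hq, hqp])]
    all_goals try rw [div_eq_iff (by simp [hp, hq, hqp])]
    all_goals try rw [eq_sub_iff_add_eq, zero_add, eq_div_iff (by simp [hp, hq, hqp])]
    all_goals ring
  · simp only [wAct, tensP, omegaPair, tPair, tbarPair, wB,
      Fintype.sum_prod_type, Fin.sum_univ_two, Pi.add_apply, Pi.sub_apply,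
      Pi.smul_apply, Prod.mk.injEq, Fin.isValue]
    norm_num
    obtain ⟨b1, hb1⟩ : ∃ x, br p q v = x := ⟨_, rfl⟩
    obtain ⟨b2, hb2⟩ : ∃ x, br p q (u * q / p) = x := ⟨_, rfl⟩
    obtain ⟨b3, hb3⟩ : ∃ x, br p q u = x := ⟨_, rfl⟩
    have hED' : E * D = q⁻¹ • (D + E + p • (D * E)) := by
      rw [← h2, smul_smul, inv_mul_cancel₀ hq, one_smul]
    obtain ⟨qi, hqi⟩ : ∃ x, (q : ℂ)⁻¹ = x := ⟨_, rfl⟩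
    rw [hqi] at hED'
    try rw [hb1]
    try rw [hb2]
    try rw [hb3]
    simp only [mul_add, add_mul, mul_sub, sub_mul, smul_mul_assoc,
      mul_smul_comm, mul_one, one_mul, hED', smul_add, smul_smul, neg_mul,
      mul_neg, neg_neg, smul_neg]
    match_scalars
    all_goals try simp only [← hb1, ← hb2, ← hb3, ← hqi, br]
    all_goals field_simp
    all_goals try rw [eq_div_iff (by simp [hp, hq, hqp])]
    all_goals try rw [div_eq_iff (by simp [hp, hq, hqp])]
    all_goals try rw [eq_sub_iff_add_eq, zero_add, eq_div_iff (by simp [hp, hq, hqp])]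
    all_goals ring
  · simp only [wAct, tensP, omegaPair, tPair, tbarPair, wB,
      Fintype.sum_prod_type, Fin.sum_univ_two, Pi.add_apply, Pi.sub_apply,
      Pi.smul_apply, Prod.mk.injEq, Fin.isValue]
    norm_num
    obtain ⟨b1, hb1⟩ : ∃ x, br p q v = x := ⟨_, rfl⟩
    obtain ⟨b2, hb2⟩ : ∃ x, br p q (u * q / p) = x := ⟨_, rfl⟩
    obtain ⟨b3, hb3⟩ : ∃ x, br p q u = x := ⟨_, rfl⟩
    have hED' : E * D = q⁻¹ • (D + E + p • (D * E)) := by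
      rw [← h2, smul_smul, inv_mul_cancel₀ hq, one_smul]
    obtain ⟨qi, hqi⟩ : ∃ x, (q : ℂ)⁻¹ = x := ⟨_, rfl⟩
    rw [hqi] at hED'
    try rw [hb1]
    try rw [hb2]
    try rw [hb3]
    simp only [mul_add, add_mul, mul_sub, sub_mul, smul_mul_assoc,
      mul_smul_comm, mul_one, one_mul, hED', smul_add, smul_smul, neg_mul,
      mul_neg, neg_neg, smul_neg]
    match_scalars
    all_goals try simp only [← hb1, ← hb2, ← hb3, ← hqi, br]
    all_goals field_simp
    all_goals try rw [eq_div_iff (by simp [hp, hq, hqp])]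
    all_goals try rw [div_eq_iff (by simp [hp, hq, hqp])]
    all_goals try rw [eq_sub_iff_add_eq, zero_add, eq_div_iff (by simp [hp, hq, hqp])]
    all_goals ring
end
end

section
/- Let D, E be linear operators on a complex vector space V and v₂ ∈ V with (β·D − δ·E + id)v₂ = 0, and let ε ∈ {+,−}. Set u := −1/c_{−ε}(β,δ) (so u = 1 for ε = +, and u = −β/δ for ε = −, assuming δ ≠ 0 in the latter case). Then K(|ω(u)⟩v₂) = λ_ε(β,δ)·(|ω(u)⟩v₂) − |t(u)⟩v₂, as an identity of pairs of vectors in V, where |ω(u)⟩v₂ denotes the pair obtained by applying each operator entry of |ω(u)⟩ to v₂. -/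
open scoped BigOperators

noncomputable section

/-- Componentwise action of a `2×2` scalar matrix on a pair of elements of a `ℂ`-module. -/
def mat2VecAct {V : Type*} [AddCommGroup V] [Module ℂ V]
    (M : Fin 2 → Fin 2 → ℂ) (x : Fin 2 → V) : Fin 2 → V :=
  fun i => ∑ j : Fin 2, M i j • x j

/-- `c₊(x,y) = y/x` and `c₋(x,y) = −1`; the sign `+` is encoded as `true`. -/
def ccB (e : Bool) (x y : ℂ) : ℂ := if e then y / x else -1

/-- `λ₊(x,y) = 0` and `λ₋(x,y) = −x−y`; the sign `+` is encoded as `true`. -/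
def lamB (e : Bool) (x y : ℂ) : ℂ := if e then 0 else -x - y

/-- With `(βD − δE + id)v₂ = 0` and `u = −1/c_{−ε}(β,δ)`, one has
`K(|ω(u)⟩v₂) = λ_ε(β,δ)·(|ω(u)⟩v₂) − |t(u)⟩v₂`. -/
theorem statement5 (p q β δ : ℂ) (hp : p ≠ 0) (hq : q ≠ 0) (hpq : p ≠ q)
    {V : Type*} [AddCommGroup V] [Module ℂ V]
    (D E : Module.End ℂ V) (v₂ : V)
    (hright : (β • D - δ • E + 1) v₂ = 0)
    (ε : Bool) (hδ : ε = false → δ ≠ 0)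
    (u : ℂ) (hu : u = -1 / ccB (!ε) β δ) :
    mat2VecAct (KB β δ) (fun i => omegaPair p q D E u i v₂) =
      fun i => lamB ε β δ • omegaPair p q D E u i v₂ - tPair u i v₂ := by
  have hr : β • D v₂ - δ • E v₂ + v₂ = 0 := by
    simpa [LinearMap.add_apply, LinearMap.sub_apply, LinearMap.smul_apply,
      Module.End.one_apply] using hright
  have hqp : q - p ≠ 0 := sub_ne_zero.mpr (Ne.symm hpq)
  obtain ⟨a, b, ha, hb⟩ : ∃ a b, D v₂ = a ∧ E v₂ = b := ⟨_, _, rfl, rfl⟩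
  rw [ha, hb] at hr
  have hc : v₂ = -(β • a - δ • b) := eq_neg_of_add_eq_zero_right hr
  funext i
  fin_cases i <;> cases ε <;>
    [(have hδ' := hδ rfl); skip; (have hδ' := hδ rfl); skip] <;>
    simp [mat2VecAct, KB, omegaPair, tPair, ccB, lamB, br, Fin.sum_univ_two,
      hu, LinearMap.add_apply, LinearMap.sub_apply, LinearMap.smul_apply,
      LinearMap.neg_apply, Module.End.one_apply, ha, hb] <;>
  (try rw [hc]) <;> match_scalars <;> field_simp <;> ring
end
end

section
/- Let R be a (possibly noncommutative) ring that is an algebra over ℂ (or any commutative ring containing p and q), and let D, E ∈ R satisfy q·E·D − p·D·E = D + E. Then for every integer n ≥ 1, qⁿ·E·Dⁿ = (1 + pD)ⁿ·E + Σ_{ℓ=1}^{n} q^{ℓ−1}·(1 + pD)^{n−ℓ}·D^ℓ. -/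
open scoped BigOperators

/-- If `qED − pDE = D + E` in an algebra `R` over a commutative ring
containing `p` and `q`, then for every `n ≥ 1`,
`qⁿ·E·Dⁿ = (1 + pD)ⁿ·E + Σ_{ℓ=1}^{n} q^{ℓ−1}·(1 + pD)^{n−ℓ}·D^ℓ`. -/
theorem statement11 {S : Type*} [CommRing S] (p q : S)
    {R : Type*} [Ring R] [Algebra S R] (D E : R)
    (hbulk : q • (E * D) - p • (D * E) = D + E)
    (n : ℕ) (hn : 1 ≤ n) :
    q ^ n • (E * D ^ n) =
      (1 + p • D) ^ n * E +
        ∑ ℓ ∈ Finset.Icc 1 n, q ^ (ℓ - 1) • ((1 + p • D) ^ (n - ℓ) * D ^ ℓ) := by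
  have hq : q • (E * D) = (1 + p • D) * E + D := by
    rw [sub_eq_iff_eq_add] at hbulk
    rw [hbulk, add_mul, one_mul, smul_mul_assoc]
    abel
  set A := 1 + p • D with hA
  have key : ∀ m, 1 ≤ m → q ^ m • (E * D ^ m) =
      A ^ m * E + ∑ i ∈ Finset.range m, q ^ i • (A ^ (m - 1 - i) * D ^ (i + 1)) := by
    intro m hm
    induction m, hm using Nat.le_induction with
    | base => simp [hq]
    | succ n hn ih =>
      have l1 : q ^ (n + 1) • (E * D ^ (n + 1)) =
          q • ((q ^ n • (E * D ^ n)) * D) := by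
        rw [pow_succ q, pow_succ D, ← mul_assoc, mul_smul, smul_mul_assoc]
        rw [smul_comm]
      rw [l1, ih, add_mul, smul_add, Finset.sum_mul, Finset.smul_sum]
      rw [mul_assoc, ← mul_smul_comm, hq, mul_add, ← mul_assoc, ← pow_succ]
      rw [Finset.sum_range_succ']
      simp only [smul_mul_assoc, smul_smul, ← pow_succ']
      have hf0 : q ^ 0 • (A ^ (n + 1 - 1 - 0) * D ^ (0 + 1)) = A ^ n * D := by simp
      rw [hf0, add_assoc]
      congr 1
      rw [add_comm]
      congr 1
      apply Finset.sum_congr rfl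
      intro i hi
      have h2 : n + 1 - 1 - (i + 1) = n - 1 - i := by omega
      rw [h2, pow_succ D (i+1), mul_assoc]
  rw [key n hn]
  congr 1
  rw [← Finset.Ico_add_one_right_eq_Icc, Finset.sum_Ico_eq_sum_range]
  apply Finset.sum_congr (by norm_num)
  intro i hi
  have h1 : 1 + i - 1 = i := by omega
  have h2 : n - (1 + i) = n - 1 - i := by omega
  have h3 : 1 + i = i + 1 := by omega
  rw [h1, h2, h3]
end

section
/- Let D, E be linear operators on a complex vector space V and v₂ ∈ V with (β·D − δ·E + id)v₂ = 0. Let v ∈ ℂ satisfy δv² − (p−q+δ−β)v − β = 0. Then K(|ω(v)⟩v₂) = δ(v−1)·(|ω(v)⟩v₂) − |t̄(v)⟩v₂, as an identity of pairs of vectors in V. -/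
open scoped BigOperators

noncomputable section

/-- With `(βD − δE + id)v₂ = 0` and `δv² − (p−q+δ−β)v − β = 0`, one has
`K(|ω(v)⟩v₂) = δ(v−1)·(|ω(v)⟩v₂) − |t̄(v)⟩v₂`. -/
theorem statement14 (p q β δ : ℂ) (hp : p ≠ 0) (hq : q ≠ 0) (hpq : p ≠ q)
    {V : Type*} [AddCommGroup V] [Module ℂ V]
    (D E : Module.End ℂ V) (v₂ : V)
    (hright : (β • D - δ • E + 1) v₂ = 0)
    (v : ℂ) (hv : δ * v ^ 2 - (p - q + δ - β) * v - β = 0) :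
    mat2VecAct (KB β δ) (fun i => omegaPair p q D E v i v₂) =
      fun i => (δ * (v - 1)) • omegaPair p q D E v i v₂ - tbarPair p q D v i v₂ := by
  have hqp : q - p ≠ 0 := sub_ne_zero.mpr (Ne.symm hpq)
  have hright' : β • D v₂ - δ • E v₂ + v₂ = 0 := by
    simpa [LinearMap.add_apply, LinearMap.sub_apply, LinearMap.smul_apply,
      Module.End.one_apply] using hright
  have hB : (δ * v + β) * br p q v = v := by
    unfold br; field_simp; linear_combination -hv
  have hC : (δ * (v - 1) - (p - q) + δ + β) * br p q v = 1 := by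
    unfold br; field_simp; linear_combination -hv
  have hA : (δ * (v - 1) - (p - q) + β) * v = β := by linear_combination hv
  funext i
  fin_cases i
  · simp only [mat2VecAct, KB, omegaPair, tbarPair, Fin.sum_univ_two, Fin.isValue,
      Fin.mk_zero, Fin.mk_one, ite_true, ite_false, reduceIte, one_ne_zero,
      LinearMap.add_apply, LinearMap.sub_apply, LinearMap.smul_apply,
      Module.End.one_apply, LinearMap.zero_apply]
    linear_combination (norm := module) v • hright' + hB • v₂
  · simp only [mat2VecAct, KB, omegaPair, tbarPair, Fin.sum_univ_two, Fin.isValue,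
      Fin.mk_zero, Fin.mk_one, ite_true, ite_false, reduceIte, one_ne_zero,
      LinearMap.add_apply, LinearMap.sub_apply, LinearMap.smul_apply,
      Module.End.one_apply, LinearMap.zero_apply]
    linear_combination (norm := module) (-1 : ℂ) • hright' - hA • D v₂ - hC • v₂
end
end
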